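/- arXiv:0907.0624 — 4 statements merged into one kernel-verified Lean document; each statement's English description precedes it below -/
import Mathlib

section
/- Let p, q ≥ 2 be multiplicatively independent integers and let m, n, a, b, c, d be positive integers with n < m. Then there exist integers k, ℓ ≥ 1 such that n·q^(c+dℓ) ≤ m·p^(a+bk) and (m+1)·p^(a+bk) ≤ (n+1)·q^(c+dℓ). -/
open Real Set

private lemma rat_of_int_rel (θ : ℝ) (z1 z2 : ℤ) (hz2 : z2 ≠ 0)
    (h : (z2 : ℝ) * θ = z1) : ¬ Irrational θ := by
  intro hirr
  apply Rat.not_irrational ((z1 : ℚ) / (z2 : ℚ))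
  have hθ : θ = (z1 : ℝ) / (z2 : ℝ) := by
    field_simp at h ⊢
    linarith [h]
  have key : (Rat.cast ((z1 : ℚ) / (z2 : ℚ)) : ℝ) = θ := by push_cast; rw [hθ]
  rwa [key]

private lemma of_int_pair (θ ε : ℝ) (hθ : 0 < θ) (hε1 : ε ≤ 1) (A M : ℤ)
    (hA : 1 ≤ A) (h1 : 0 < (A : ℝ) * θ + M) (h2 : (A : ℝ) * θ + M < ε) :
    ∃ a b : ℕ, 1 ≤ a ∧ 0 < (a : ℝ) * θ - b ∧ (a : ℝ) * θ - b < ε := by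
  have hAθ : (0 : ℝ) < (A : ℝ) * θ := by
    have : (1 : ℝ) ≤ (A : ℝ) := by exact_mod_cast hA
    nlinarith
  have hM : M ≤ 0 := by
    by_contra hM
    push_neg at hM
    have : (1 : ℝ) ≤ (M : ℝ) := by exact_mod_cast hM
    linarith
  refine ⟨A.toNat, (-M).toNat, ?_, ?_, ?_⟩
  · omega
  all_goals
  · have hA' : ((A.toNat : ℕ) : ℝ) = (A : ℝ) := by
      exact_mod_cast Int.toNat_of_nonneg (show (0:ℤ) ≤ A by omega)
    have hM' : (((-M).toNat : ℕ) : ℝ) = -(M : ℝ) := by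
      have h := Int.toNat_of_nonneg (show (0:ℤ) ≤ -M by omega)
      have : (((-M).toNat : ℕ) : ℝ) = ((-M : ℤ) : ℝ) := by exact_mod_cast h
      rw [this]; push_cast; ring
    rw [hA', hM']
    linarith

private lemma small_pos (θ ε : ℝ) (hθ : 0 < θ) (hirr : Irrational θ)
    (hε0 : 0 < ε) (hε1 : ε < 1) :
    ∃ a b : ℕ, 1 ≤ a ∧ 0 < (a : ℝ) * θ - b ∧ (a : ℝ) * θ - b < ε := by
  rcases (AddSubgroup.closure ({1, θ} : Set ℝ)).dense_or_cyclic with hD | ⟨g₀, hg₀⟩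
  · obtain ⟨g, hgS, hg⟩ := hD.exists_mem_open (isOpen_Ioo : IsOpen (Set.Ioo (0:ℝ) ε))
      ⟨ε / 2, by constructor <;> linarith⟩
    obtain ⟨M, N, hMN⟩ := AddSubgroup.mem_closure_pair.mp hgS
    simp only [zsmul_eq_mul, mul_one] at hMN
    obtain ⟨hg1, hg2⟩ := hg
    rcases lt_trichotomy N 0 with hN | hN | hN
    · -- N < 0 : flip using 1 - ⌊1/g⌋ * g
      have hgε : g < 1 := lt_trans hg2 hε1
      set F : ℤ := ⌊1 / g⌋ with hF
      have hFg : (F : ℝ) * g ≤ 1 := by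
        have := Int.floor_le (1 / g)
        calc (F : ℝ) * g ≤ (1 / g) * g := by
              apply mul_le_mul_of_nonneg_right this (le_of_lt hg1)
          _ = 1 := by field_simp
      have hF1 : 1 ≤ F := by
        have : (1 : ℝ) ≤ 1 / g := by
          rw [le_div_iff₀ hg1]; linarith
        have := Int.le_floor.mpr (by exact_mod_cast this : ((1:ℤ):ℝ) ≤ 1/g)
        exact this
      have hFg2 : 1 < ((F : ℝ) + 1) * g := by
        have := Int.lt_floor_add_one (1 / g)
        calc (1 : ℝ) = (1 / g) * g := by field_simp
          _ < ((F : ℝ) + 1) * g := by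
              apply mul_lt_mul_of_pos_right (by push_cast; linarith) hg1
      set h : ℝ := 1 - (F : ℝ) * g with hh
      have hh1 : 0 ≤ h := by simp [hh]; linarith
      have hh2 : h < g := by simp [hh]; nlinarith
      have hhrel : h = ((-F * N : ℤ) : ℝ) * θ + ((1 - F * M : ℤ) : ℝ) := by
        push_cast
        rw [hh, ← hMN]; ring
      have hhne : h ≠ 0 := by
        intro h0
        refine rat_of_int_rel θ (1 - F * M) (F * N) ?_ ?_ hirr
        · have : F * N ≤ -1 := by nlinarith
          omega
        · rw [h0] at hhrel
          push_cast at hhrel ⊢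
          linarith
      refine of_int_pair θ ε hθ (le_of_lt hε1) (-F * N) (1 - F * M) (by nlinarith) ?_ ?_
      · rw [← hhrel]; exact lt_of_le_of_ne hh1 (Ne.symm hhne)
      · rw [← hhrel]; linarith
    · -- N = 0 : g is a positive integer < 1, absurd
      subst hN
      simp only [Int.cast_zero, zero_mul, add_zero] at hMN
      exfalso
      have hM1 : 1 ≤ M := by
        have : (0:ℝ) < (M:ℝ) := by rw [hMN]; exact hg1
        exact_mod_cast this
      have h1 : (1:ℝ) ≤ (M:ℝ) := by exact_mod_cast hM1
      rw [← hMN] at hg2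
      linarith
    · exact of_int_pair θ ε hθ (le_of_lt hε1) N M hN (by linarith [hMN]) (by linarith [hMN])
  · -- cyclic case: θ would be rational
    exfalso
    have h1 : (1 : ℝ) ∈ AddSubgroup.closure ({1, θ} : Set ℝ) :=
      AddSubgroup.subset_closure (by simp)
    have h2 : θ ∈ AddSubgroup.closure ({1, θ} : Set ℝ) :=
      AddSubgroup.subset_closure (by simp)
    rw [hg₀, AddSubgroup.mem_closure_singleton] at h1 h2
    obtain ⟨u, hu⟩ := h1
    obtain ⟨v, hv⟩ := h2
    simp only [zsmul_eq_mul] at hu hv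
    have hu0 : u ≠ 0 := by
      intro h; rw [h] at hu; simp at hu
    refine rat_of_int_rel θ v u hu0 ?_ hirr
    rw [← hv, ← mul_assoc, mul_comm (u:ℝ) (v:ℝ), mul_assoc, hu, mul_one]

private lemma kron (θ : ℝ) (hθ : 0 < θ) (hirr : Irrational θ) (α β : ℝ) (hab : α < β) :
    ∃ k ℓ : ℕ, 1 ≤ k ∧ 1 ≤ ℓ ∧ α < (k : ℝ) * θ - ℓ ∧ (k : ℝ) * θ - ℓ < β := by
  set ε := min (β - α) (1 / 2) with hε
  have hε0 : 0 < ε := lt_min (by linarith) (by norm_num)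
  have hε1 : ε < 1 := lt_of_le_of_lt (min_le_right _ _) (by norm_num)
  have hεβα : ε ≤ β - α := min_le_left _ _
  obtain ⟨A, B, hA, hg1, hg2⟩ := small_pos θ ε hθ hirr hε0 hε1
  set g := (A : ℝ) * θ - B with hg
  obtain ⟨N, hN⟩ := exists_nat_gt (max (-α) 1)
  have hNα : -α < (N : ℝ) := lt_of_le_of_lt (le_max_left _ _) hN
  have hN1 : 1 ≤ N := by
    have : (1 : ℝ) < (N : ℝ) := lt_of_le_of_lt (le_max_right _ _) hN
    exact_mod_cast this.le
  set J : ℕ := (⌊(α + N) / g⌋).toNat + 1 with hJ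
  have hx0 : 0 < (α + N) / g := div_pos (by linarith) hg1
  have hJR : (J : ℝ) = (⌊(α + N) / g⌋ : ℝ) + 1 := by
    rw [hJ]
    have h : ((⌊(α + N) / g⌋.toNat : ℕ) : ℝ) = ((⌊(α + N) / g⌋ : ℤ) : ℝ) := by
      exact_mod_cast Int.toNat_of_nonneg (Int.floor_nonneg.mpr hx0.le)
    rw [Nat.cast_add, Nat.cast_one, h]
  have hJg1 : α + N < (J : ℝ) * g := by
    rw [hJR]
    have := Int.lt_floor_add_one ((α + N) / g)
    calc α + (N:ℝ) = ((α + N) / g) * g := by field_simp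
      _ < ((⌊(α + N) / g⌋ : ℝ) + 1) * g := mul_lt_mul_of_pos_right this hg1
  have hJg2 : (J : ℝ) * g < β + N := by
    rw [hJR]
    have h1 := Int.floor_le ((α + N) / g)
    have : ((⌊(α + N) / g⌋ : ℝ) + 1) * g ≤ ((α + N) / g) * g + g := by nlinarith
    have h2 : ((α + N) / g) * g = α + N := by field_simp
    nlinarith
  refine ⟨J * A, J * B + N, ?_, by omega, ?_, ?_⟩
  · exact Nat.one_le_iff_ne_zero.mpr (by positivity)
  all_goals
  · have : ((J * A : ℕ) : ℝ) * θ - ((J * B + N : ℕ) : ℝ) = (J : ℝ) * g - N := by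
      push_cast; rw [hg]; ring
    rw [this]
    linarith

set_option maxHeartbeats 1600000 in
theorem stmt_1 (p q m n a b c d : ℕ) (hp : 2 ≤ p) (hq : 2 ≤ q)
    (hindep : ∀ k ℓ : ℕ, p ^ k = q ^ ℓ → k = 0 ∧ ℓ = 0)
    (hm : 1 ≤ m) (hn : 1 ≤ n) (ha : 1 ≤ a) (hb : 1 ≤ b) (hc : 1 ≤ c) (hd : 1 ≤ d)
    (hnm : n < m) :
    ∃ k ℓ : ℕ, 1 ≤ k ∧ 1 ≤ ℓ ∧
      n * q ^ (c + d * ℓ) ≤ m * p ^ (a + b * k) ∧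
      (m + 1) * p ^ (a + b * k) ≤ (n + 1) * q ^ (c + d * ℓ) := by
  have hp1 : (1 : ℝ) < p := by exact_mod_cast hp.trans_lt' one_lt_two
  have hq1 : (1 : ℝ) < q := by exact_mod_cast hq.trans_lt' one_lt_two
  have hlp : 0 < Real.log p := Real.log_pos hp1
  have hlq : 0 < Real.log q := Real.log_pos hq1
  set lp := Real.log p
  set lq := Real.log q
  set D : ℝ := (d : ℝ) * lq with hDdef
  have hD : 0 < D := by positivity
  set θ : ℝ := ((b : ℝ) * lp) / D with hθdef
  have hθpos : 0 < θ := by positivity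
  have hirr : Irrational θ := by
    by_contra hnotirr
    rw [Irrational] at hnotirr
    push_neg at hnotirr
    obtain ⟨r, hr⟩ := hnotirr
    have hrpos : 0 < r := by
      have : (0 : ℝ) < (r : ℝ) := hr ▸ hθpos
      exact_mod_cast this
    have hnum : 0 < r.num := Rat.num_pos.mpr hrpos
    have hkey : ((r.den * b : ℕ) : ℝ) * lp = ((r.num.toNat * d : ℕ) : ℝ) * lq := by
      have h1 : (b : ℝ) * lp = (r : ℝ) * D := by
        have hr2 : (r : ℝ) = ((b : ℝ) * lp) / D := by rw [hr]
        rw [hr2, div_mul_cancel₀ _ hD.ne']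
      have h2 : (r : ℝ) * (r.den : ℝ) = (r.num : ℝ) := by
        rw [Rat.cast_def]
        field_simp
      have h3 : (r.num.toNat : ℝ) = (r.num : ℝ) := by
        exact_mod_cast congrArg Int.cast (Int.toNat_of_nonneg hnum.le)
      push_cast [h3]
      calc (r.den : ℝ) * (b : ℝ) * lp = (r.den : ℝ) * ((r:ℝ) * D) := by rw [mul_assoc, h1]
        _ = ((r:ℝ) * (r.den:ℝ)) * ((d:ℝ) * lq) := by rw [hDdef]; ring
        _ = (r.num : ℝ) * (d : ℝ) * lq := by rw [h2]; ring
    have hpow : (p : ℝ) ^ (r.den * b) = (q : ℝ) ^ (r.num.toNat * d) := by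
      apply Real.log_injOn_pos (mem_Ioi.mpr (by positivity)) (mem_Ioi.mpr (by positivity))
      rw [Real.log_pow, Real.log_pow]
      exact_mod_cast hkey
    have hpowN : p ^ (r.den * b) = q ^ (r.num.toNat * d) := by exact_mod_cast hpow
    rcases hindep _ _ hpowN with ⟨h1', -⟩
    rcases Nat.mul_eq_zero.mp h1' with h | h
    · exact r.den_nz h
    · omega
  -- interval endpoints
  have hmR : (0:ℝ) < m := by exact_mod_cast hm
  have hnR : (0:ℝ) < n := by exact_mod_cast hn
  set α : ℝ := (Real.log n + c * lq - Real.log m - a * lp) / D with hα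
  set β : ℝ := (Real.log (n + 1) + c * lq - Real.log (m + 1) - a * lp) / D with hβ
  have hnmR : (n : ℝ) < m := by exact_mod_cast hnm
  have hαβ : α < β := by
    rw [hα, hβ, div_lt_div_iff₀ hD hD]
    have key : Real.log n + Real.log (m + 1) < Real.log (n + 1) + Real.log m := by
      rw [← Real.log_mul hnR.ne' (by positivity), ← Real.log_mul (by positivity) hmR.ne']
      apply Real.log_lt_log (by positivity)
      nlinarith
    nlinarith
  obtain ⟨k, ℓ, hk, hℓ, h1, h2⟩ := kron θ hθpos hirr α β hαβ
  have hθD : θ * D = (b : ℝ) * lp := div_mul_cancel₀ _ hD.ne'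
  have hαD : α * D = Real.log n + c * lq - Real.log m - a * lp := div_mul_cancel₀ _ hD.ne'
  have hβD : β * D = Real.log (n + 1) + c * lq - Real.log (m + 1) - a * lp :=
    div_mul_cancel₀ _ hD.ne'
  have hmul : ((k : ℝ) * θ - ℓ) * D = (k : ℝ) * ((b : ℝ) * lp) - (ℓ : ℝ) * D := by
    rw [sub_mul, mul_assoc, hθD]
  refine ⟨k, ℓ, hk, hℓ, ?_, ?_⟩
  · have e1 : Real.log n + c * lq - Real.log m - a * lp
        < (k : ℝ) * ((b : ℝ) * lp) - (ℓ : ℝ) * D := by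
      have h' := (mul_lt_mul_iff_left₀ hD).mpr h1
      rw [hαD, hmul] at h'
      exact h'
    rw [hDdef] at e1
    have hlog1 : Real.log ((n : ℝ) * (q : ℝ) ^ (c + d * ℓ))
        < Real.log ((m : ℝ) * (p : ℝ) ^ (a + b * k)) := by
      rw [Real.log_mul hnR.ne' (by positivity), Real.log_mul hmR.ne' (by positivity),
        Real.log_pow, Real.log_pow]
      push_cast
      nlinarith
    have := (Real.log_lt_log_iff (by positivity) (by positivity)).mp hlog1
    have hle : (n : ℝ) * (q : ℝ) ^ (c + d * ℓ) ≤ (m : ℝ) * (p : ℝ) ^ (a + b * k) := this.le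
    exact_mod_cast hle
  · have e2 : (k : ℝ) * ((b : ℝ) * lp) - (ℓ : ℝ) * D
        < Real.log (n + 1) + c * lq - Real.log (m + 1) - a * lp := by
      have h' := (mul_lt_mul_iff_left₀ hD).mpr h2
      rw [hβD, hmul] at h'
      exact h'
    rw [hDdef] at e2
    have hlog2 : Real.log (((m : ℝ) + 1) * (p : ℝ) ^ (a + b * k))
        < Real.log (((n : ℝ) + 1) * (q : ℝ) ^ (c + d * ℓ)) := by
      rw [Real.log_mul (by positivity) (by positivity),
        Real.log_mul (by positivity) (by positivity), Real.log_pow, Real.log_pow]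
      push_cast
      nlinarith
    have := (Real.log_lt_log_iff (by positivity) (by positivity)).mp hlog2
    have hle : ((m : ℝ) + 1) * (p : ℝ) ^ (a + b * k)
        ≤ ((n : ℝ) + 1) * (q : ℝ) ^ (c + d * ℓ) := this.le
    exact_mod_cast hle
end

section
/- There exists a 2-recognizable infinite set X ⊆ ℕ such that the language 0*ρ₂(X) is right dense (for every word u over {0,1} there is a word v with uv ∈ 0*ρ₂(X)) but X is not syndetic. -/
def pRep (p : ℕ) (hp : 0 < p) (n : ℕ) : List (Fin p) :=
  (Nat.digits p n).reverse.map (fun d => ⟨d % p, Nat.mod_lt d hp⟩)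

/-- the set: numbers whose binary representation has odd length -/
def Xodd : Set ℕ := {n : ℕ | Odd (Nat.digits 2 n).length}

def myStep : Fin 4 → Fin 2 → Fin 4
  | 0, a => if a = 1 then 1 else 3
  | 1, _ => 2
  | 2, _ => 1
  | 3, _ => 3

def myDFA : DFA (Fin 2) (Fin 4) := ⟨myStep, 0, {1}⟩

lemma evalFrom3 (w : List (Fin 2)) : myDFA.evalFrom 3 w = 3 := by
  induction w with
  | nil => rfl
  | cons a t ih => simpa [DFA.evalFrom, myDFA, myStep] using ih

lemma evalFrom12 (w : List (Fin 2)) :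
    (myDFA.evalFrom 1 w = if Even w.length then 1 else 2) ∧
    (myDFA.evalFrom 2 w = if Even w.length then 2 else 1) := by
  induction w with
  | nil => simp [DFA.evalFrom]
  | cons a t ih =>
    have h1 : myDFA.evalFrom 1 (a :: t) = myDFA.evalFrom 2 t := rfl
    have h2 : myDFA.evalFrom 2 (a :: t) = myDFA.evalFrom 1 t := rfl
    rw [h1, h2, ih.1, ih.2]
    by_cases h : Even t.length <;> simp [Nat.even_add_one, h]

lemma myDFA_eval (w : List (Fin 2)) :
    w ∈ myDFA.accepts ↔ ∃ t, w = 1 :: t ∧ Odd w.length := by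
  constructor
  · intro h
    have h' : myDFA.eval w = 1 := by
      exact h
    match w with
    | [] => simp [DFA.eval, DFA.evalFrom, myDFA] at h'
    | a :: t =>
      have ha : myDFA.eval (a :: t) = myDFA.evalFrom (myStep 0 a) t := rfl
      have ha2 : a = 0 ∨ a = 1 := by fin_cases a <;> simp
      rcases ha2 with rfl | rfl
      · rw [ha] at h'
        simp [myStep, evalFrom3] at h'
      · have e1 : myStep 0 1 = 1 := by decide
        rw [ha, e1, (evalFrom12 t).1] at h'
        by_cases he : Even t.length
        · exact ⟨t, rfl, by simp [Nat.odd_add_one, Nat.not_odd_iff_even, he]⟩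
        · simp [he] at h'
  · rintro ⟨t, rfl, hodd⟩
    have ha : myDFA.eval (1 :: t) = myDFA.evalFrom 1 t := rfl
    have he : Even t.length := by
      simpa [Nat.odd_add_one, Nat.not_odd_iff_even] using hodd
    show myDFA.eval (1 :: t) ∈ myDFA.accept
    rw [ha, (evalFrom12 t).1, if_pos he]
    simp [myDFA]

lemma pRep_spec {w : List (Fin 2)} {t : List (Fin 2)} (hw : w = 1 :: t) :
    Nat.digits 2 (Nat.ofDigits 2 (w.reverse.map Fin.val)) = w.reverse.map Fin.val ∧
    pRep 2 (by norm_num) (Nat.ofDigits 2 (w.reverse.map Fin.val)) = w := by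
  have hdig : Nat.digits 2 (Nat.ofDigits 2 (w.reverse.map Fin.val)) = w.reverse.map Fin.val := by
    apply Nat.digits_ofDigits 2 (by norm_num)
    · intro x hx
      simp only [List.mem_map] at hx
      obtain ⟨a, _, rfl⟩ := hx
      exact a.isLt
    · intro h
      have hltail : w.reverse.map Fin.val = (t.reverse.map Fin.val) ++ [1] := by
        simp [hw]
      have h2 : some ((w.reverse.map Fin.val).getLast h) = some 1 := by
        rw [← List.getLast?_eq_getLast, hltail, List.getLast?_concat]
      simp only [Option.some.injEq] at h2
      omega
  refine ⟨hdig, ?_⟩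
  rw [pRep, hdig]
  rw [show List.map Fin.val w.reverse = (List.map Fin.val w).reverse from List.map_reverse]
  rw [List.reverse_reverse, List.map_map]
  have : ((fun d => (⟨d % 2, Nat.mod_lt d (by norm_num)⟩ : Fin 2)) ∘ Fin.val) = id := by
    funext a
    simp [Nat.mod_eq_of_lt a.isLt, Fin.ext_iff]
  rw [this, List.map_id]

lemma pRep_of_mem {n : ℕ} (hn : n ∈ Xodd) : ∃ t, pRep 2 (by norm_num) n = 1 :: t := by
  have hne : n ≠ 0 := by
    rintro rfl
    simpa [Xodd] using hn
  have hd : Nat.digits 2 n ≠ [] := Nat.digits_ne_nil_iff_ne_zero.mpr hne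
  have hrne : (Nat.digits 2 n).reverse ≠ [] := by simpa using hd
  obtain ⟨a, r, hr⟩ := List.exists_cons_of_ne_nil hrne
  have hlast : a = 1 := by
    have h1 : (Nat.digits 2 n).getLast hd ≠ 0 := Nat.getLast_digit_ne_zero 2 hne
    have h2 : (Nat.digits 2 n).getLast hd < 2 := by
      apply Nat.digits_lt_base (by norm_num)
      exact List.getLast_mem hd
    have h3 : some ((Nat.digits 2 n).getLast hd) = some a := by
      rw [← List.getLast?_eq_getLast, ← List.head?_reverse, hr]
      rfl
    simp only [Option.some.injEq] at h3
    omega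
  refine ⟨r.map (fun d => ⟨d % 2, Nat.mod_lt d (by norm_num)⟩), ?_⟩
  rw [pRep, hr, List.map_cons, hlast]
  rfl

lemma decomp (u : List (Fin 2)) :
    ∃ z w, u = List.replicate z (0 : Fin 2) ++ w ∧ (w = [] ∨ ∃ t, w = 1 :: t) := by
  induction u with
  | nil => exact ⟨0, [], rfl, Or.inl rfl⟩
  | cons a t ih =>
    fin_cases a
    · obtain ⟨z, w, h1, h2⟩ := ih
      exact ⟨z + 1, w, by simp [List.replicate_succ, h1], h2⟩
    · exact ⟨0, 1 :: t, rfl, Or.inr ⟨t, rfl⟩⟩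

theorem stmt_8 :
    ∃ X : Set ℕ, X.Infinite ∧
      (∃ (σ : Type) (_ : Fintype σ) (A : DFA (Fin 2) σ),
        A.accepts = {w : List (Fin 2) | ∃ n ∈ X, w = pRep 2 (by norm_num) n}) ∧
      (∀ u : List (Fin 2), ∃ v : List (Fin 2), ∃ n ∈ X, ∃ z : ℕ,
        u ++ v = List.replicate z (0 : Fin 2) ++ pRep 2 (by norm_num) n) ∧
      ¬ ∃ C : ℕ, 0 < C ∧ ∀ n : ℕ, ∃ x ∈ X, n ≤ x ∧ x < n + C := by
  have hlen : ∀ n : ℕ, n ≠ 0 → (Nat.digits 2 n).length = Nat.log 2 n + 1 := by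
    intro n hn; exact Nat.digits_len 2 n (by norm_num) hn
  refine ⟨Xodd, ?_, ?_, ?_, ?_⟩
  · -- infinite
    apply Set.infinite_of_injective_forall_mem (f := fun i : ℕ => 4 ^ i)
    · intro a b hab
      exact Nat.pow_right_injective (by norm_num) hab
    · intro i
      have h4 : (4 : ℕ) ^ i = 2 ^ (2 * i) := by
        rw [pow_mul]; norm_num
      have hlog : Nat.log 2 (4 ^ i) = 2 * i := by
        rw [h4]; exact Nat.log_pow (by norm_num) _
      have : (Nat.digits 2 (4 ^ i)).length = 2 * i + 1 := by
        rw [hlen _ (by positivity), hlog]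
      show Odd (Nat.digits 2 (4 ^ i)).length
      rw [this]
      exact ⟨i, rfl⟩
  · -- DFA
    refine ⟨Fin 4, inferInstance, myDFA, ?_⟩
    ext w
    rw [myDFA_eval]
    constructor
    · rintro ⟨t, rfl, hodd⟩
      obtain ⟨hdig, hrep⟩ := pRep_spec (w := 1 :: t) (t := t) rfl
      refine ⟨Nat.ofDigits 2 ((1 :: t).reverse.map Fin.val), ?_, hrep.symm⟩
      show Odd (Nat.digits 2 _).length
      rw [hdig]
      simpa using hodd
    · rintro ⟨n, hn, rfl⟩
      obtain ⟨t, ht⟩ := pRep_of_mem hn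
      refine ⟨t, ht, ?_⟩
      have : (pRep 2 (by norm_num) n).length = (Nat.digits 2 n).length := by
        simp [pRep]
      rw [this]
      exact hn
  · -- right dense
    intro u
    obtain ⟨z, w, hu, hw⟩ := decomp u
    rcases hw with rfl | ⟨t, rfl⟩
    · refine ⟨[1], 1, ?_, z, ?_⟩
      · show Odd (Nat.digits 2 1).length
        simp
      · have hd1 : Nat.digits 2 1 = [1] := by simp
        have : pRep 2 (by norm_num) 1 = [1] := by
          rw [pRep, hd1]; rfl
        rw [this, hu]; simp
    · -- w = 1 :: t
      set v : List (Fin 2) := if Even t.length then [] else [0] with hv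
      have hlen2 : Odd (1 :: (t ++ v)).length := by
        have hvlen : v.length = if Even t.length then 0 else 1 := by
          by_cases he : Even t.length <;> simp [hv, he]
        simp only [List.length_cons, List.length_append, hvlen]
        by_cases he : Even t.length <;> simp only [he, if_true, if_false] <;>
          rw [Nat.odd_iff] <;> rw [Nat.even_iff] at he <;> omega
      obtain ⟨hdig, hrep⟩ := pRep_spec (w := 1 :: (t ++ v)) (t := t ++ v) rfl
      refine ⟨v, Nat.ofDigits 2 ((1 :: (t ++ v)).reverse.map Fin.val), ?_, z, ?_⟩
      · show Odd (Nat.digits 2 _).length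
        rw [hdig]
        have h := hlen2
        simp only [List.length_map, List.length_reverse, List.length_cons,
          List.length_append] at h ⊢
        rw [Nat.odd_iff] at h ⊢
        omega
      · rw [hrep, hu]
        simp
  · -- not syndetic
    rintro ⟨C, hC, hAll⟩
    obtain ⟨x, hx, hx1, hx2⟩ := hAll (2 ^ (2 * C + 1))
    have hub : x < 2 ^ (2 * C + 2) := by
      have : C ≤ 2 ^ (2 * C + 1) := by
        calc C ≤ 2 ^ C := Nat.lt_pow_self (by norm_num : 1 < 2) |>.le
        _ ≤ 2 ^ (2 * C + 1) := Nat.pow_le_pow_right (by norm_num) (by omega)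
      calc x < 2 ^ (2 * C + 1) + C := hx2
        _ ≤ 2 ^ (2 * C + 1) + 2 ^ (2 * C + 1) := by omega
        _ = 2 ^ (2 * C + 2) := by ring
    have hxne : x ≠ 0 := by
      have : 0 < 2 ^ (2 * C + 1) := by positivity
      omega
    have hlog : Nat.log 2 x = 2 * C + 1 := Nat.log_eq_of_pow_le_of_lt_pow hx1 hub
    have hlx : (Nat.digits 2 x).length = 2 * C + 2 := by rw [hlen x hxne, hlog]
    have : Odd (Nat.digits 2 x).length := hx
    rw [hlx, Nat.odd_iff] at this
    omega
end

section
/- Let p ≥ 2 and let X ⊆ ℕ be an infinite set recognized by a DFA A reading p-ary representations (most significant digit first). Then for every bound M there exist integers m ≥ M and a, b ≥ 1 such that for all k ∈ ℕ, the interval [m·p^(a+bk), (m+1)·p^(a+bk)) contains an element of X. -/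
/-- The numeric value of a word over `Fin p`, read most significant digit first. -/
def wval (p : ℕ) (w : List (Fin p)) : ℕ := Nat.ofDigits p (w.reverse.map Fin.val)

lemma wval_append (p : ℕ) (u v : List (Fin p)) :
    wval p (u ++ v) = wval p u * p ^ v.length + wval p v := by
  unfold wval
  rw [List.reverse_append, List.map_append, Nat.ofDigits_append]
  simp [mul_comm, add_comm]

lemma wval_lt (p : ℕ) (hp : 1 < p) (v : List (Fin p)) : wval p v < p ^ v.length := by
  have h := Nat.ofDigits_lt_base_pow_length (b := p) (l := v.reverse.map Fin.val) hp ?_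
  · simpa [wval] using h
  · intro x hx
    simp only [List.mem_map, List.mem_reverse] at hx
    obtain ⟨d, _, rfl⟩ := hx
    exact d.is_lt

lemma wval_pRep (p : ℕ) (hp1 : 1 < p) (hp : 0 < p) (n : ℕ) :
    wval p (pRep p hp n) = n := by
  unfold wval pRep
  rw [List.map_reverse, List.map_map, List.map_reverse, List.reverse_reverse]
  have h : (Nat.digits p n).map (Fin.val ∘ fun d => (⟨d % p, Nat.mod_lt d hp⟩ : Fin p))
      = Nat.digits p n := by
    rw [List.map_congr_left (g := id) ?_, List.map_id]
    intro d hd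
    simp [Nat.mod_eq_of_lt (Nat.digits_lt_base hp1 hd)]
  rw [h, Nat.ofDigits_digits]

lemma wval_head_le (p : ℕ) (u : List (Fin p)) (hu : u ≠ [])
    (hd : (u.head hu).val ≠ 0) : p ^ (u.length - 1) ≤ wval p u := by
  obtain ⟨h, t, rfl⟩ : ∃ h t, u = h :: t := ⟨u.head hu, u.tail, (List.cons_head_tail hu).symm⟩
  have he : (h :: t) = [h] ++ t := rfl
  rw [he, wval_append]
  have h1 : wval p [h] = h.val := by simp [wval, Nat.ofDigits_singleton]
  have h2 : 1 ≤ (h.val : ℕ) := by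
    simp only [List.head_cons] at hd; omega
  have h3 : p ^ t.length ≤ wval p [h] * p ^ t.length := by
    rw [h1]; exact Nat.le_mul_of_pos_left _ (by omega)
  simp only [List.length_append, List.length_cons, List.length_nil]
  calc p ^ (1 + t.length - 1) = p ^ t.length := by congr 1; omega
    _ ≤ wval p [h] * p ^ t.length := h3
    _ ≤ _ := Nat.le_add_right _ _

theorem stmt_9 (p : ℕ) (hp : 2 ≤ p) (X : Set ℕ) (hX : X.Infinite)
    (hrec : ∃ (σ : Type) (_ : Fintype σ) (A : DFA (Fin p) σ),
      A.accepts = {w : List (Fin p) | ∃ n ∈ X, w = pRep p (by omega) n}) :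
    ∀ M : ℕ, ∃ m ≥ M, ∃ a b : ℕ, 1 ≤ a ∧ 1 ≤ b ∧ ∀ k : ℕ,
      ∃ x ∈ X, m * p ^ (a + b * k) ≤ x ∧ x < (m + 1) * p ^ (a + b * k) := by
  obtain ⟨σ, instF, A, hA⟩ := hrec
  intro M
  have hp1 : 1 < p := by omega
  have hp0 : 0 < p := by omega
  haveI : Fintype σ := instF
  have hcard : 1 ≤ Fintype.card σ := Fintype.card_pos_iff.mpr ⟨A.start⟩
  set C := Fintype.card σ with hC
  obtain ⟨n, hnX, hn⟩ := hX.exists_gt (p ^ (M + 1 + C))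
  have hppos : 0 < p ^ (M + 1 + C) := pow_pos hp0 _
  have hn0 : n ≠ 0 := by omega
  set w : List (Fin p) := pRep p hp0 n with hw
  have hwdig : w.length = (Nat.digits p n).length := by simp [hw, pRep]
  have hwlen : M + 1 + C ≤ w.length := by
    have hlog : M + 1 + C ≤ Nat.log p n := (Nat.le_log_iff_pow_le hp1 hn0).mpr (le_of_lt hn)
    rw [hwdig, Nat.digits_len p n hp1 hn0]
    omega
  -- head of w is nonzero
  have hdne : Nat.digits p n ≠ [] := Nat.digits_ne_nil_iff_ne_zero.mpr hn0
  have hwne : w ≠ [] := by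
    simp [hw, pRep, hdne]
  have hhead : (w.head hwne).val ≠ 0 := by
    have h0 : 0 < w.length := List.length_pos_iff.mpr hwne
    have : w.head hwne = w[0] := List.head_eq_getElem hwne
    rw [this]
    have hlen0 : 0 < (Nat.digits p n).reverse.length := by
      simpa [hw, pRep] using h0
    have : w[0]'h0 = (fun d => (⟨d % p, Nat.mod_lt d hp0⟩ : Fin p))
        ((Nat.digits p n).reverse[0]'hlen0) := by
      simp [hw, pRep]
    rw [this]
    have hlast : (Nat.digits p n).reverse[0]'hlen0
        = (Nat.digits p n).getLast hdne := by
      rw [List.getElem_reverse, List.getLast_eq_getElem]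
      simp
    simp only [hlast]
    have hlt : (Nat.digits p n).getLast hdne < p :=
      Nat.digits_lt_base hp1 (List.getLast_mem hdne)
    rw [Nat.mod_eq_of_lt hlt]
    exact Nat.getLast_digit_ne_zero p hn0
  set u := w.take (M + 1) with hu
  set v := w.drop (M + 1) with hv
  have huv : u ++ v = w := List.take_append_drop _ _
  have hul : u.length = M + 1 := by
    rw [hu, List.length_take]; omega
  have hvC : C ≤ v.length := by
    rw [hv, List.length_drop]; omega
  have hwacc : w ∈ A.accepts := by
    rw [hA]; exact ⟨n, hnX, rfl⟩
  rw [DFA.mem_accepts] at hwacc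
  obtain ⟨q, y₁, y₂, y₃, hvabc, _, hbne, hqa, hqb, hqc⟩ :=
    DFA.evalFrom_split (M := A) (s := A.evalFrom A.start u) (x := v) hvC rfl
  -- the chosen m
  have hune : u ≠ [] := by
    intro h; rw [h] at hul; simp at hul
  have huhead : (u.head hune).val ≠ 0 := by
    have h00 : u.head hune = w.head hwne := by
      rw [List.head_eq_getElem hune, List.head_eq_getElem hwne]
      simp [hu]
    rw [h00]; exact hhead
  have hm : M ≤ wval p u := by
    have h1 : p ^ M ≤ wval p u := by
      have := wval_head_le p u hune huhead
      rwa [hul, Nat.add_sub_cancel] at this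
    have h2 : M < 2 ^ M := Nat.lt_two_pow_self
    have h3 : 2 ^ M ≤ p ^ M := Nat.pow_le_pow_left hp M
    omega
  refine ⟨wval p u, hm, v.length, y₂.length, by omega, List.length_pos_iff.mpr hbne, ?_⟩
  intro k
  -- the pumped word
  set fl := (List.replicate (k + 1) y₂).flatten with hfl
  have hloop : ∀ j, A.evalFrom q ((List.replicate j y₂).flatten) = q := by
    intro j
    induction j with
    | zero => simp
    | succ j ih =>
      rw [List.replicate_succ, List.flatten_cons, DFA.evalFrom_of_append, hqb, ih]
  set r := y₁ ++ fl ++ y₃ with hr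
  have hracc : u ++ r ∈ A.accepts := by
    rw [DFA.mem_accepts]
    have heval : A.eval (u ++ r) = A.evalFrom (A.evalFrom A.start u) v := by
      show A.evalFrom A.start (u ++ r) = _
      rw [DFA.evalFrom_of_append, hr, DFA.evalFrom_of_append, DFA.evalFrom_of_append,
        hqa, hloop, hqc]
    rw [heval]
    have : A.eval w ∈ A.accept := hwacc
    rwa [← huv, show A.eval (u ++ v) = A.evalFrom (A.evalFrom A.start u) v from
      DFA.evalFrom_of_append _ _ _ _] at this
  have hfllen : fl.length = (k + 1) * y₂.length := by
    simp [hfl, List.length_flatten, List.map_replicate, List.sum_replicate, Nat.smul_one_eq_cast]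
  have hrlen : r.length = v.length + y₂.length * k := by
    have hvlen : v.length = y₁.length + y₂.length + y₃.length := by
      rw [hvabc]; simp; omega
    simp only [hr, List.length_append, hfllen, hvlen]
    ring
  rw [hA] at hracc
  obtain ⟨x, hxX, hxw⟩ := hracc
  refine ⟨x, hxX, ?_, ?_⟩
  · have hxval : x = wval p u * p ^ r.length + wval p r := by
      have : wval p (pRep p hp0 x) = x := wval_pRep p hp1 hp0 x
      rw [← this, ← hxw, wval_append]
    rw [hxval, hrlen]
    exact Nat.le_add_right _ _
  · have hxval : x = wval p u * p ^ r.length + wval p r := by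
      have : wval p (pRep p hp0 x) = x := wval_pRep p hp1 hp0 x
      rw [← this, ← hxw, wval_append]
    have hrlt : wval p r < p ^ r.length := wval_lt p hp1 r
    rw [hxval, hrlen, add_mul, one_mul]
    rw [hrlen] at hrlt
    omega
end

section
/- Let p, q ≥ 2 be multiplicatively independent integers. If an infinite set X ⊆ ℕ is both p-recognizable and q-recognizable, then X is syndetic. -/
namespace Cob

variable {p : ℕ}

/-- value of a word, msd first -/
def valW (p : ℕ) (l : List (Fin p)) : ℕ := l.foldl (fun n d => n * p + d.val) 0

lemma valW_aux (l : List (Fin p)) : ∀ n : ℕ,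
    l.foldl (fun n d => n * p + d.val) n = n * p ^ l.length + valW p l := by
  induction l with
  | nil => intro n; simp [valW]
  | cons d t ih =>
    intro n
    simp only [List.foldl_cons, List.length_cons, valW]
    rw [ih (n * p + d.val), ih (0 * p + d.val)]
    ring

lemma valW_append (l1 l2 : List (Fin p)) :
    valW p (l1 ++ l2) = valW p l1 * p ^ l2.length + valW p l2 := by
  simp only [valW, List.foldl_append]
  exact valW_aux l2 _

lemma valW_singleton (d : Fin p) : valW p [d] = d.val := by simp [valW]

lemma valW_lt (hp : 0 < p) (l : List (Fin p)) : valW p l < p ^ l.length := by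
  induction l with
  | nil => simp [valW]
  | cons d t ih =>
    have : valW p (d :: t) = d.val * p ^ t.length + valW p t := by
      have := valW_append [d] t
      simpa [valW_singleton] using this
    rw [this]
    calc d.val * p ^ t.length + valW p t < d.val * p ^ t.length + p ^ t.length := by omega
      _ = (d.val + 1) * p ^ t.length := by ring
      _ ≤ p * p ^ t.length := by
          have : d.val + 1 ≤ p := d.isLt
          exact Nat.mul_le_mul_right _ this
      _ = p ^ (d :: t).length := by rw [List.length_cons]; ring

lemma pRep_succ (hp : 1 < p) {n : ℕ} (hn : 0 < n) (h : 0 < p) :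
    pRep p h n = pRep p h (n / p) ++ [⟨n % p, Nat.mod_lt n h⟩] := by
  unfold pRep
  rw [Nat.digits_def' hp hn]
  simp only [List.reverse_cons, List.map_append, List.map_cons, List.map_nil]
  congr 2
  exact Fin.ext (Nat.mod_eq_of_lt (Nat.mod_lt n h))

lemma valW_pRep (hp : 1 < p) (h : 0 < p) (n : ℕ) : valW p (pRep p h n) = n := by
  induction n using Nat.strong_induction_on with
  | _ n ih =>
    rcases Nat.eq_zero_or_pos n with rfl | hn
    · simp [pRep, valW]
    · rw [pRep_succ hp hn h, valW_append, valW_singleton]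
      have hd : n / p < n := Nat.div_lt_self hn hp
      rw [ih _ hd]
      simp only [List.length_cons, List.length_nil, pow_one, List.length_singleton]
      rw [pow_one]
      exact Nat.div_add_mod' n p

/-- decomposition: block numbers have representation = rep of a ++ k digits -/
lemma pRep_block (hp : 1 < p) (h : 0 < p) {a : ℕ} (ha : 1 ≤ a) :
    ∀ k r : ℕ, r < p ^ k →
      ∃ w : List (Fin p), w.length = k ∧ pRep p h (a * p ^ k + r) = pRep p h a ++ w := by
  intro k
  induction k with
  | zero =>
    intro r hr
    simp only [pow_zero, Nat.lt_one_iff] at hr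
    subst hr
    exact ⟨[], rfl, by simp⟩
  | succ k ih =>
    intro r hr
    have hx : 0 < a * p ^ (k+1) + r := by positivity
    have hdiv : (a * p ^ (k+1) + r) / p = a * p ^ k + r / p := by
      rw [pow_succ]
      rw [show a * (p ^ k * p) + r = r + (a * p ^ k) * p by ring]
      rw [Nat.add_mul_div_right _ _ (by omega : 0 < p)]
      omega
    have hrp : r / p < p ^ k := by
      rw [Nat.div_lt_iff_lt_mul (by omega : 0 < p)]
      calc r < p ^ (k+1) := hr
        _ = p ^ k * p := pow_succ p k
    obtain ⟨w, hwl, hw⟩ := ih (r / p) hrp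
    refine ⟨w ++ [⟨(a * p ^ (k+1) + r) % p, Nat.mod_lt _ h⟩], by simp [hwl], ?_⟩
    rw [pRep_succ hp hx h, hdiv, hw]
    simp


lemma castToNat {x : ℤ} (h : 0 ≤ x) : ((x.toNat : ℕ) : ℝ) = (x : ℝ) := by
  rw [← Int.cast_natCast, Int.toNat_of_nonneg h]

lemma exists_small_pos (α β δ : ℝ) (hα : 0 < α) (hβ : 0 < β) (hδ : 0 < δ)
    (hδα : δ < α) (hδβ : δ < β)
    (hirr : ∀ a b : ℤ, (a : ℝ) * α = (b : ℝ) * β → a = 0 ∧ b = 0) :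
    ∃ a b : ℕ, 1 ≤ a ∧ 1 ≤ b ∧ 0 < (a : ℝ) * α - b * β ∧ (a : ℝ) * α - b * β < δ := by
  set S : AddSubgroup ℝ := AddSubgroup.closure {α, β} with hS
  have hαS : α ∈ S := AddSubgroup.subset_closure (by simp)
  have hβS : β ∈ S := AddSubgroup.subset_closure (by simp)
  have hdense : Dense (S : Set ℝ) := by
    rcases S.dense_or_cyclic with h | ⟨x0, hx0⟩
    · exact h
    · exfalso
      rw [hx0] at hαS hβS
      obtain ⟨m, hm⟩ := AddSubgroup.mem_closure_singleton.mp hαS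
      obtain ⟨n, hn⟩ := AddSubgroup.mem_closure_singleton.mp hβS
      have : (n : ℝ) * α = (m : ℝ) * β := by
        rw [← hm, ← hn]
        push_cast [zsmul_eq_mul]
        ring
      obtain ⟨hn0, hm0⟩ := hirr n m this
      subst hn0
      rw [← hn] at hβ
      simp at hβ
  obtain ⟨g0, hg0S, hg0mem⟩ := hdense.exists_mem_open isOpen_Ioo (Set.nonempty_Ioo.mpr hδ)
  obtain ⟨hg0pos, hg0lt⟩ := hg0mem
  obtain ⟨a, b, hab⟩ := AddSubgroup.mem_closure_pair.mp hg0S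
  have habR : (a : ℝ) * α + (b : ℝ) * β = g0 := by
    rw [← hab]; push_cast [zsmul_eq_mul]; ring
  rcases le_or_gt a 0 with ha | ha
  · rcases le_or_gt b 0 with hb | hb
    · exfalso
      have h1 : (a : ℝ) * α ≤ 0 :=
        mul_nonpos_of_nonpos_of_nonneg (by exact_mod_cast ha) hα.le
      have h2 : (b : ℝ) * β ≤ 0 :=
        mul_nonpos_of_nonpos_of_nonneg (by exact_mod_cast hb) hβ.le
      linarith
    · -- a ≤ 0, b ≥ 1 : floor trick
      set j : ℤ := ⌊α / g0⌋ with hj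
      have hj1 : 1 ≤ j := by
        rw [hj, Int.le_floor]
        rw [le_div_iff₀ hg0pos]
        push_cast
        linarith
      have hjle : (j : ℝ) * g0 ≤ α := by
        have h := Int.floor_le (α / g0)
        rw [← hj] at h
        calc (j : ℝ) * g0 ≤ (α / g0) * g0 := mul_le_mul_of_nonneg_right h hg0pos.le
          _ = α := div_mul_cancel₀ _ hg0pos.ne'
      have hjgt : α < ((j : ℝ) + 1) * g0 := by
        have h := Int.lt_floor_add_one (α / g0)
        rw [← hj] at h
        calc α = (α / g0) * g0 := (div_mul_cancel₀ _ hg0pos.ne').symm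
          _ < ((j : ℝ) + 1) * g0 := mul_lt_mul_of_pos_right h hg0pos
      have hja : j * a ≤ 0 := mul_nonpos_of_nonneg_of_nonpos (by omega) ha
      have hjb : 0 < j * b := mul_pos (by omega) hb
      have hval : ((1 - j * a : ℤ) : ℝ) * α - ((j * b : ℤ) : ℝ) * β = α - (j : ℝ) * g0 := by
        rw [← habR]
        push_cast
        ring
      have hgpos : 0 < ((1 - j * a : ℤ) : ℝ) * α - ((j * b : ℤ) : ℝ) * β := by
        rcases lt_or_eq_of_le (by rw [hval]; linarith :
            (0:ℝ) ≤ ((1 - j * a : ℤ) : ℝ) * α - ((j * b : ℤ) : ℝ) * β) with h | h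
        · exact h
        · exfalso
          have heq : ((1 - j * a : ℤ) : ℝ) * α = ((j * b : ℤ) : ℝ) * β := by linarith
          obtain ⟨h1, _⟩ := hirr _ _ heq
          omega
      refine ⟨(1 - j * a).toNat, (j * b).toNat, by omega, by omega, ?_, ?_⟩ <;>
        rw [castToNat (by omega), castToNat (by omega)]
      · exact hgpos
      · rw [hval]; linarith
  · rcases le_or_gt b 0 with hb | hb
    · have hb1 : b ≤ -1 := by
        by_contra h
        have hb0 : b = 0 := by omega
        subst hb0
        have h2 : (a : ℝ) * α ≥ α := by
          have h3 : (1 : ℝ) ≤ (a : ℝ) := by exact_mod_cast ha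
          nlinarith
        simp only [Int.cast_zero, zero_mul, add_zero] at habR
        linarith
      refine ⟨a.toNat, (-b).toNat, by omega, by omega, ?_, ?_⟩ <;>
        rw [castToNat (by omega), castToNat (by omega)]
      · push_cast; linarith [habR]
      · push_cast; linarith [habR]
    · exfalso
      have h1 : α ≤ (a : ℝ) * α := by
        have h3 : (1 : ℝ) ≤ (a : ℝ) := by exact_mod_cast ha
        nlinarith
      have h2 : 0 ≤ (b : ℝ) * β := by
        have h3 : (0 : ℝ) ≤ (b : ℝ) := by exact_mod_cast hb.le
        positivity
      linarith

lemma hit (α β t1 t2 : ℝ) (hα : 0 < α) (hβ : 0 < β) (h12 : t1 < t2)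
    (hirr : ∀ a b : ℤ, (a : ℝ) * α = (b : ℝ) * β → a = 0 ∧ b = 0) (N : ℕ) :
    ∃ i n : ℕ, N ≤ n ∧ t1 < (i : ℝ) * α - n * β ∧ (i : ℝ) * α - n * β < t2 := by
  set δ : ℝ := min (t2 - t1) (min α β) / 2 with hδdef
  have hδ : 0 < δ := by
    apply div_pos _ (by norm_num)
    simp only [lt_min_iff]
    exact ⟨by linarith, hα, hβ⟩
  have hδ12 : δ < t2 - t1 := by
    have : min (t2 - t1) (min α β) ≤ t2 - t1 := min_le_left _ _
    rw [hδdef]; linarith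
  have hδα : δ < α := by
    have h1 : min (t2 - t1) (min α β) ≤ α := le_trans (min_le_right _ _) (min_le_left _ _)
    rw [hδdef]; linarith
  have hδβ : δ < β := by
    have h1 : min (t2 - t1) (min α β) ≤ β := le_trans (min_le_right _ _) (min_le_right _ _)
    rw [hδdef]; linarith
  obtain ⟨a, b, ha, hb, hgpos, hglt⟩ := exists_small_pos α β δ hα hβ hδ hδα hδβ hirr
  set g : ℝ := (a : ℝ) * α - b * β with hg
  obtain ⟨M, hMN, hMβ⟩ : ∃ M : ℕ, N ≤ M ∧ 0 < t1 + (M : ℝ) * β := by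
    refine ⟨N + ⌈|t1| / β⌉₊ + 1, by omega, ?_⟩
    have h1 : |t1| / β ≤ (⌈|t1| / β⌉₊ : ℝ) := Nat.le_ceil _
    have h2 : ((N + ⌈|t1| / β⌉₊ + 1 : ℕ) : ℝ) ≥ (⌈|t1| / β⌉₊ : ℝ) + 1 := by
      push_cast; linarith [Nat.cast_nonneg (α := ℝ) N]
    have h5 : (|t1| / β) * β = |t1| := div_mul_cancel₀ _ hβ.ne'
    have h6 : -t1 ≤ |t1| := neg_le_abs t1
    nlinarith
  set u : ℝ := (t1 + (M : ℝ) * β) / g with hu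
  have hupos : 0 < u := div_pos hMβ hgpos
  obtain ⟨j, hjr⟩ : ∃ j : ℕ, (j : ℝ) = (⌊u⌋₊ : ℝ) + 1 := ⟨⌊u⌋₊ + 1, by push_cast; ring⟩
  have hug : u * g = t1 + (M : ℝ) * β := by rw [hu]; exact div_mul_cancel₀ _ hgpos.ne'
  have hjg1 : t1 + (M : ℝ) * β < (j : ℝ) * g := by
    have h1 : u < (⌊u⌋₊ : ℝ) + 1 := Nat.lt_floor_add_one u
    have h2 : u * g < ((⌊u⌋₊ : ℝ) + 1) * g := mul_lt_mul_of_pos_right h1 hgpos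
    rw [hjr]; linarith
  have hjg2 : (j : ℝ) * g ≤ t1 + (M : ℝ) * β + g := by
    have h1 : (⌊u⌋₊ : ℝ) ≤ u := Nat.floor_le hupos.le
    have h2 : ((⌊u⌋₊ : ℝ) + 1) * g ≤ (u + 1) * g := by nlinarith
    rw [hjr]; nlinarith
  refine ⟨j * a, j * b + M, by omega, ?_, ?_⟩ <;>
  · push_cast
    have hkey : (j : ℝ) * a * α - ((j : ℝ) * b + M) * β = (j : ℝ) * g - M * β := by
      rw [hg]; ring
    rw [hkey]
    first
    | linarith
    | linarith [hglt, hδ12]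


lemma nat_log_indep {p q : ℕ} (hp : 2 ≤ p) (hq : 2 ≤ q)
    (hindep : ∀ k ℓ : ℕ, p ^ k = q ^ ℓ → k = 0 ∧ ℓ = 0) :
    ∀ a b : ℕ, (a : ℝ) * Real.log q = (b : ℝ) * Real.log p → a = 0 ∧ b = 0 := by
  intro a b heq
  have hq0 : (0:ℝ) < (q:ℝ) := by positivity
  have hp0 : (0:ℝ) < (p:ℝ) := by positivity
  have h1 : Real.log ((q:ℝ) ^ a) = Real.log ((p:ℝ) ^ b) := by
    rw [Real.log_pow, Real.log_pow]
    push_cast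
    exact heq
  have h2 : ((q:ℝ) ^ a) = ((p:ℝ) ^ b) := by
    have ha' : (0:ℝ) < (q:ℝ) ^ a := by positivity
    have hb' : (0:ℝ) < (p:ℝ) ^ b := by positivity
    rw [← Real.exp_log ha', ← Real.exp_log hb', h1]
  have h3 : q ^ a = p ^ b := by exact_mod_cast h2
  obtain ⟨hb0, ha0⟩ := hindep b a h3.symm
  exact ⟨ha0, hb0⟩

lemma irr_of_indep {p q : ℕ} (hp : 2 ≤ p) (hq : 2 ≤ q)
    (hindep : ∀ k ℓ : ℕ, p ^ k = q ^ ℓ → k = 0 ∧ ℓ = 0)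
    {m b2 : ℕ} (hm : 1 ≤ m) (hb2 : 1 ≤ b2) :
    ∀ A B : ℤ, (A : ℝ) * ((m : ℝ) * Real.log q) = (B : ℝ) * ((b2 : ℝ) * Real.log p) →
      A = 0 ∧ B = 0 := by
  have hlq : (0:ℝ) < Real.log q := Real.log_pos (by exact_mod_cast hq)
  have hlp : (0:ℝ) < Real.log p := Real.log_pos (by exact_mod_cast hp)
  have hm0 : (0:ℝ) < (m:ℝ) := by exact_mod_cast hm
  have hb20 : (0:ℝ) < (b2:ℝ) := by exact_mod_cast hb2
  intro A B heq
  rcases le_or_gt 0 A with hA | hA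
  · have hB : 0 ≤ B := by
      by_contra hB
      push_neg at hB
      have h1 : (0:ℝ) ≤ (A:ℝ) * ((m:ℝ) * Real.log q) := by
        apply mul_nonneg (by exact_mod_cast hA)
        positivity
      have h2 : (B:ℝ) * ((b2:ℝ) * Real.log p) < 0 := by
        apply mul_neg_of_neg_of_pos (by exact_mod_cast hB)
        positivity
      linarith
    have heq' : ((A.toNat * m : ℕ) : ℝ) * Real.log q = ((B.toNat * b2 : ℕ) : ℝ) * Real.log p := by
      push_cast
      rw [castToNat hA, castToNat hB]
      nlinarith [heq]
    obtain ⟨h1, h2⟩ := nat_log_indep hp hq hindep _ _ heq'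
    constructor <;> [skip; skip]
    · have : A.toNat = 0 := by
        rcases Nat.mul_eq_zero.mp h1 with h' | h'
        · exact h'
        · omega
      omega
    · have : B.toNat = 0 := by
        rcases Nat.mul_eq_zero.mp h2 with h' | h'
        · exact h'
        · omega
      omega
  · have hB : B < 0 := by
      by_contra hB
      push_neg at hB
      have h1 : (A:ℝ) * ((m:ℝ) * Real.log q) < 0 := by
        apply mul_neg_of_neg_of_pos
        · exact_mod_cast hA
        · positivity
      have h2 : (0:ℝ) ≤ (B:ℝ) * ((b2:ℝ) * Real.log p) := by
        apply mul_nonneg (by exact_mod_cast hB)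
        positivity
      linarith
    have heq' : (((-A).toNat * m : ℕ) : ℝ) * Real.log q
        = (((-B).toNat * b2 : ℕ) : ℝ) * Real.log p := by
      push_cast
      rw [castToNat (by omega), castToNat (by omega)]
      push_cast
      nlinarith [heq]
    obtain ⟨h1, h2⟩ := nat_log_indep hp hq hindep _ _ heq'
    have hA0 : (-A).toNat = 0 := by
      rcases Nat.mul_eq_zero.mp h1 with h' | h'
      · exact h'
      · omega
    omega


lemma part1 (hp : 2 ≤ p) {σp : Type} [Fintype σp] (A : DFA (Fin p) σp)
    (X : Set ℕ) (h : 0 < p)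
    (hacc : A.accepts = {w : List (Fin p) | ∃ n ∈ X, w = pRep p h n})
    (hns : ∀ C : ℕ, 0 < C → ∃ n : ℕ, ∀ x ∈ X, ¬(n ≤ x ∧ x < n + C)) :
    ∃ a k1 b2 : ℕ, 1 ≤ a ∧ 1 ≤ b2 ∧
      ∀ n : ℕ, ∀ y ∈ X, ¬(a * p ^ (k1 + n * b2) ≤ y ∧ y < (a + 1) * p ^ (k1 + n * b2)) := by
  classical
  have hp1 : 1 < p := hp
  -- gaps give dead blocks
  have hgap : ∀ k : ℕ, ∃ a : ℕ, 1 ≤ a ∧ ∀ x ∈ X, ¬(a * p ^ k ≤ x ∧ x < (a + 1) * p ^ k) := by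
    intro k
    obtain ⟨n, hn⟩ := hns (3 * p ^ k) (by positivity)
    refine ⟨n / p ^ k + 1, Nat.succ_le_succ (Nat.zero_le _), ?_⟩
    intro x hx ⟨h1, h2⟩
    apply hn x hx
    have e1 := Nat.div_add_mod n (p ^ k)
    have e2 : n % p ^ k < p ^ k := Nat.mod_lt _ (by positivity)
    have hB : 0 < p ^ k := by positivity
    have e0 : 0 ≤ n % p ^ k := Nat.zero_le _
    have e0' : p ^ k * (n / p ^ k) ≤ n := by omega
    have h3 : (n / p ^ k + 1) * p ^ k = p ^ k * (n / p ^ k) + p ^ k := by ring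
    have h4 : (n / p ^ k + 1 + 1) * p ^ k = p ^ k * (n / p ^ k) + 2 * p ^ k := by ring
    constructor
    · linarith
    · linarith
  choose aF haF1 haFdead using hgap
  -- pigeonhole on states
  set f : ℕ → σp := fun k => A.evalFrom A.start (pRep p h (aF k)) with hf
  obtain ⟨t, ht⟩ := Finite.exists_infinite_fiber f
  have hK1 : (f ⁻¹' {t}).Infinite := Set.infinite_coe_iff.mp ht
  -- dead words from t
  have hdead : ∀ k ∈ f ⁻¹' {t}, ∀ w : List (Fin p), w.length = k →
      A.evalFrom t w ∉ A.accept := by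
    intro k hk w hw hacc'
    have hkt : f k = t := hk
    have hW : pRep p h (aF k) ++ w ∈ A.accepts := by
      have : A.eval (pRep p h (aF k) ++ w) ∈ A.accept := by
        show A.evalFrom A.start _ ∈ A.accept
        rw [DFA.evalFrom_of_append]
        rw [show A.evalFrom A.start (pRep p h (aF k)) = t from hkt]
        exact hacc'
      exact (DFA.mem_accepts (M := A)).mpr this
    rw [hacc] at hW
    obtain ⟨x', hx'X, hx'eq⟩ := hW
    have hval : x' = aF k * p ^ k + valW p w := by
      have := valW_pRep hp1 h x'
      rw [← hx'eq] at this
      rw [valW_append, valW_pRep hp1 h, hw] at this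
      omega
    apply haFdead k x' hx'X
    have hwlt : valW p w < p ^ k := hw ▸ valW_lt h w
    constructor
    · omega
    · have : (aF k + 1) * p ^ k = aF k * p ^ k + p ^ k := by ring
      omega
  -- step set iteration
  set F : Finset σp → Finset σp :=
    fun S => S.biUnion (fun s => Finset.image (fun d : Fin p => A.step s d) Finset.univ) with hF
  have hR : ∀ (k : ℕ) (s' : σp), s' ∈ F^[k] {t} ↔
      ∃ w : List (Fin p), w.length = k ∧ A.evalFrom t w = s' := by
    intro k
    induction k with
    | zero =>
      intro s'
      simp only [Function.iterate_zero, id_eq, Finset.mem_singleton]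
      constructor
      · rintro rfl; exact ⟨[], rfl, rfl⟩
      · rintro ⟨w, hw, hev⟩
        rw [List.length_eq_zero_iff] at hw
        subst hw
        exact hev.symm
    | succ k ih =>
      intro s'
      rw [Function.iterate_succ_apply']
      constructor
      · intro hs'
        rw [hF] at hs'
        simp only [Finset.mem_biUnion, Finset.mem_image, Finset.mem_univ, true_and] at hs'
        obtain ⟨s, hs, d, hd⟩ := hs'
        obtain ⟨w, hw, hev⟩ := (ih s).mp hs
        refine ⟨w ++ [d], by simp [hw], ?_⟩
        rw [DFA.evalFrom_of_append, hev, DFA.evalFrom_singleton, hd]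
      · rintro ⟨w, hw, hev⟩
        rcases w.eq_nil_or_concat' with rfl | ⟨w', d, rfl⟩
        · simp at hw
        · rw [hF]
          simp only [Finset.mem_biUnion, Finset.mem_image, Finset.mem_univ, true_and]
          have hw' : w'.length = k := by simpa using hw
          refine ⟨A.evalFrom t w', (ih _).mpr ⟨w', hw', rfl⟩, d, ?_⟩
          rw [← hev, DFA.evalFrom_of_append, DFA.evalFrom_singleton]
  -- pigeonhole on reach-sets over K1
  obtain ⟨k1, hk1, k2, hk2, hk12, hRk⟩ :=
    hK1.exists_ne_map_eq_of_mapsTo (f := fun k => F^[k] ({t} : Finset σp))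
      (Set.mapsTo_univ _ _) Set.finite_univ
  -- wlog k1 < k2
  wlog hlt : k1 < k2 generalizing k1 k2
  · exact this k2 hk2 k1 hk1 (Ne.symm hk12) hRk.symm (by omega)
  set b2 : ℕ := k2 - k1 with hb2
  have hb21 : 1 ≤ b2 := by omega
  have hfix : F^[b2] (F^[k1] ({t} : Finset σp)) = F^[k1] ({t} : Finset σp) := by
    rw [← Function.iterate_add_apply]
    rw [show b2 + k1 = k2 by omega]
    exact hRk.symm
  have hper : ∀ n : ℕ, F^[k1 + n * b2] ({t} : Finset σp) = F^[k1] ({t} : Finset σp) := by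
    intro n
    induction n with
    | zero => simp
    | succ n ih =>
      rw [show k1 + (n + 1) * b2 = b2 + (k1 + n * b2) by ring]
      rw [Function.iterate_add_apply, ih, hfix]
  refine ⟨aF k1, k1, b2, haF1 k1, hb21, ?_⟩
  intro n y hyX ⟨hy1, hy2⟩
  set K : ℕ := k1 + n * b2 with hK
  have hr : y - aF k1 * p ^ K < p ^ K := by
    have : (aF k1 + 1) * p ^ K = aF k1 * p ^ K + p ^ K := by ring
    omega
  obtain ⟨w, hwl, hweq⟩ := pRep_block hp1 h (haF1 k1) K (y - aF k1 * p ^ K) hr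
  have hyeq : aF k1 * p ^ K + (y - aF k1 * p ^ K) = y := by omega
  rw [hyeq] at hweq
  have hyacc : pRep p h y ∈ A.accepts := by
    rw [hacc]; exact ⟨y, hyX, rfl⟩
  have hs' : A.evalFrom t w ∈ A.accept := by
    have : A.eval (pRep p h y) ∈ A.accept := (DFA.mem_accepts (M := A)).mp hyacc
    rw [hweq] at this
    have h2 : A.evalFrom A.start (pRep p h (aF k1) ++ w) ∈ A.accept := this
    rw [DFA.evalFrom_of_append] at h2
    rwa [show A.evalFrom A.start (pRep p h (aF k1)) = t from hk1] at h2
  have hmem : A.evalFrom t w ∈ F^[K] ({t} : Finset σp) := (hR K _).mpr ⟨w, hwl, rfl⟩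
  rw [hper n] at hmem
  obtain ⟨w1, hw1l, hw1⟩ := (hR k1 _).mp hmem
  exact hdead k1 hk1 w1 hw1l (hw1 ▸ hs')


lemma part2 (hq : 2 ≤ q) {σq : Type} [Fintype σq] (B : DFA (Fin q) σq)
    (X : Set ℕ) (h : 0 < q)
    (hacc : B.accepts = {w : List (Fin q) | ∃ n ∈ X, w = pRep q h n})
    (hX : X.Infinite) :
    ∃ E M m : ℕ, ∃ F : ℤ, 1 ≤ E ∧ 1 ≤ M ∧ 1 ≤ m ∧
      ∀ i : ℕ, ∃ y ∈ X, (M : ℤ) * y = E * q ^ (m * i) - F := by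
  have hq1 : 1 < q := hq
  -- a long accepted word
  obtain ⟨x, hxX, hxbig⟩ := hX.exists_gt (q ^ Fintype.card σq)
  have hxacc : pRep q h x ∈ B.accepts := by rw [hacc]; exact ⟨x, hxX, rfl⟩
  have hlen : Fintype.card σq ≤ (pRep q h x).length := by
    have h1 : x < q ^ (Nat.digits q x).length := Nat.lt_base_pow_length_digits hq1
    have h2 : q ^ Fintype.card σq < q ^ (Nat.digits q x).length := lt_of_lt_of_le hxbig h1.le
    have h3 : Fintype.card σq < (Nat.digits q x).length :=
      (Nat.pow_lt_pow_iff_right hq1).mp h2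
    simpa [pRep] using h3.le
  obtain ⟨u, v, w, hsplit, hlen2, hvne, hpump⟩ := B.pumping_lemma hxacc hlen
  set m : ℕ := v.length with hm
  have hm1 : 1 ≤ m := List.length_pos_iff.mpr hvne
  set c0 : ℕ := w.length with hc0
  -- pumped words accepted
  have hmem : ∀ i : ℕ, u ++ (List.replicate i v).flatten ++ w ∈ B.accepts := by
    intro i
    apply hpump
    have hJ : (List.replicate i v).flatten ∈ KStar.kstar ({v} : Language (Fin q)) := by
      apply Language.join_mem_kstar
      intro y hy
      rw [List.eq_of_mem_replicate hy]
      rfl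
    have h2 : u ++ (List.replicate i v).flatten ∈
        ({u} : Language (Fin q)) * KStar.kstar ({v} : Language (Fin q)) :=
      Language.mem_mul.mpr ⟨u, rfl, _, hJ, rfl⟩
    exact Language.mem_mul.mpr ⟨_, h2, w, rfl, rfl⟩
  -- elements of X
  have hy : ∀ i : ℕ, ∃ y ∈ X, pRep q h y = u ++ (List.replicate i v).flatten ++ w := by
    intro i
    have hh := hmem i
    rw [hacc] at hh
    obtain ⟨y, hyX, hyrep⟩ := hh
    exact ⟨y, hyX, hyrep.symm⟩
  set z : ℕ → ℕ := fun i => valW q (u ++ (List.replicate i v).flatten) with hz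
  set V : ℕ := valW q v with hV
  set Wv : ℕ := valW q w with hW
  have hyval : ∀ i : ℕ, ∀ y : ℕ, pRep q h y = u ++ (List.replicate i v).flatten ++ w →
      y = z i * q ^ c0 + Wv := by
    intro i y hyrep
    have h1 := valW_pRep hq1 h y
    rw [hyrep, valW_append] at h1
    exact h1.symm
  have hrec : ∀ i : ℕ, z (i + 1) = z i * q ^ m + V := by
    intro i
    show valW q (u ++ (List.replicate (i + 1) v).flatten) = _
    rw [List.replicate_succ', List.flatten_append]
    simp only [List.flatten_cons, List.flatten_nil, List.append_nil]
    rw [← List.append_assoc, valW_append]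
  obtain ⟨M', hM'⟩ : ∃ M', M' + 1 = q ^ m :=
    ⟨q ^ m - 1, by have : 1 ≤ q ^ m := Nat.one_le_pow _ _ (by omega); omega⟩
  have hM'1 : 1 ≤ M' := by
    have h2 : q ≤ q ^ m := by
      calc q = q ^ 1 := (pow_one q).symm
        _ ≤ q ^ m := Nat.pow_le_pow_right (by omega) hm1
    omega
  have key : ∀ i : ℕ, M' * z i + V = (M' * z 0 + V) * (q ^ m) ^ i := by
    intro i
    induction i with
    | zero => simp
    | succ i ih =>
      rw [hrec i, pow_succ]
      calc M' * (z i * q ^ m + V) + V = (M' * z i + V) * q ^ m := by rw [← hM']; ring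
        _ = (M' * z 0 + V) * (q ^ m) ^ i * q ^ m := by rw [ih]
        _ = (M' * z 0 + V) * ((q ^ m) ^ i * q ^ m) := by ring
  -- E0 positive
  have hE0 : 1 ≤ M' * z 0 + V := by
    by_contra hE0
    have hMz : M' * z 0 = 0 ∧ V = 0 := by omega
    have hz0 : z 0 = 0 := by
      rcases Nat.mul_eq_zero.mp hMz.1 with h' | h'
      · omega
      · exact h'
    have hV0 : V = 0 := hMz.2
    have hzi : ∀ i, z i = 0 := by
      intro i
      have := key i
      rw [hz0, hV0] at this
      simp at this
      omega
    obtain ⟨y0, hy0X, hr0⟩ := hy 0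
    obtain ⟨y1, hy1X, hr1⟩ := hy 1
    have hv0 : y0 = z 0 * q ^ c0 + Wv := hyval 0 y0 hr0
    have hv1 : y1 = z 1 * q ^ c0 + Wv := hyval 1 y1 hr1
    have heq : y0 = y1 := by rw [hv0, hv1, hzi 0, hzi 1]
    have hrep : u ++ (List.replicate 0 v).flatten ++ w
        = u ++ (List.replicate 1 v).flatten ++ w := by
      rw [← hr0, ← hr1, heq]
    have hlenrep := congrArg List.length hrep
    simp only [List.length_append, List.replicate, List.flatten_cons, List.flatten_nil,
      List.append_nil, List.length_nil] at hlenrep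
    omega
  refine ⟨(M' * z 0 + V) * q ^ c0, M', m,
    (V : ℤ) * q ^ c0 - M' * Wv, ?_, hM'1, hm1, ?_⟩
  · have : 1 ≤ q ^ c0 := Nat.one_le_pow _ _ (by omega)
    exact Nat.one_le_iff_ne_zero.mpr (by positivity)
  · intro i
    obtain ⟨y, hyX, hyrep⟩ := hy i
    refine ⟨y, hyX, ?_⟩
    have hv : y = z i * q ^ c0 + Wv := hyval i y hyrep
    have keyZ : (M' : ℤ) * z i + V = (M' * z 0 + V : ℕ) * q ^ (m * i) := by
      rw [pow_mul]
      exact_mod_cast key i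
    rw [hv]
    push_cast
    push_cast at keyZ
    linear_combination (q : ℤ) ^ c0 * keyZ

end Cob

open Cob in
theorem stmt_12 (p q : ℕ) (hp : 2 ≤ p) (hq : 2 ≤ q)
    (hindep : ∀ k ℓ : ℕ, p ^ k = q ^ ℓ → k = 0 ∧ ℓ = 0)
    (X : Set ℕ) (hX : X.Infinite)
    (hprec : ∃ (σ : Type) (_ : Fintype σ) (A : DFA (Fin p) σ),
      A.accepts = {w : List (Fin p) | ∃ n ∈ X, w = pRep p (by omega) n})
    (hqrec : ∃ (σ : Type) (_ : Fintype σ) (A : DFA (Fin q) σ),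
      A.accepts = {w : List (Fin q) | ∃ n ∈ X, w = pRep q (by omega) n}) :
    ∃ C : ℕ, 0 < C ∧ ∀ n : ℕ, ∃ x ∈ X, n ≤ x ∧ x < n + C := by
  by_contra hsyn
  push_neg at hsyn
  have hns : ∀ C : ℕ, 0 < C → ∃ n : ℕ, ∀ x ∈ X, ¬(n ≤ x ∧ x < n + C) := by
    intro C hC
    obtain ⟨n, hn⟩ := hsyn C hC
    exact ⟨n, fun x hx hcl => by have := hn x hx hcl.1; omega⟩
  obtain ⟨σ1, fin1, A, hA⟩ := hprec
  obtain ⟨σ2, fin2, B, hB⟩ := hqrec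
  obtain ⟨a, k1, b2, ha1, hb21, H1⟩ := part1 hp A X (by omega) hA hns
  obtain ⟨E, M, m, F, hE1, hM1, hm1, H2⟩ := part2 hq B X (by omega) hB hX
  -- logs
  have hlp : (0:ℝ) < Real.log p := Real.log_pos (by exact_mod_cast hp)
  have hlq : (0:ℝ) < Real.log q := Real.log_pos (by exact_mod_cast hq)
  set α : ℝ := (m : ℝ) * Real.log q with hα
  set β : ℝ := (b2 : ℝ) * Real.log p with hβ
  have hα0 : 0 < α := by
    apply mul_pos _ hlq
    exact_mod_cast hm1
  have hβ0 : 0 < β := by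
    apply mul_pos _ hlp
    exact_mod_cast hb21
  set t1 : ℝ := Real.log (4 * M * a + M : ℕ) + k1 * Real.log p - Real.log (4 * E : ℕ) with ht1
  set t2 : ℝ := Real.log (4 * M * a + 2 * M : ℕ) + k1 * Real.log p - Real.log (4 * E : ℕ)
    with ht2
  have h12 : t1 < t2 := by
    have h1 : ((4 * M * a + M : ℕ) : ℝ) < ((4 * M * a + 2 * M : ℕ) : ℝ) := by
      push_cast
      have : (1:ℝ) ≤ (M:ℝ) := by exact_mod_cast hM1
      linarith
    have h2 : (0:ℝ) < ((4 * M * a + M : ℕ) : ℝ) := by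
      push_cast
      have : (1:ℝ) ≤ (M:ℝ) := by exact_mod_cast hM1
      have : (0:ℝ) ≤ (M:ℝ) * (a:ℝ) := by positivity
      nlinarith
    have := Real.log_lt_log h2 h1
    rw [ht1, ht2]
    linarith
  set F0 : ℕ := F.natAbs with hF0
  set N0 : ℕ := 4 * F0 + 4 with hN0
  obtain ⟨i, n, hnN, hlow, hhigh⟩ :=
    hit α β t1 t2 hα0 hβ0 h12 (irr_of_indep hp hq hindep hm1 hb21) N0
  set K : ℕ := k1 + n * b2 with hK
  -- p^K is large
  have hPbig : 4 * F0 + 4 ≤ p ^ K := by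
    have h1 : N0 < 2 ^ N0 := Nat.lt_two_pow_self
    have h2 : 2 ^ N0 ≤ p ^ N0 := Nat.pow_le_pow_left hp N0
    have h3 : p ^ N0 ≤ p ^ K := by
      apply Nat.pow_le_pow_right (by omega)
      have : N0 ≤ n * b2 := by
        calc N0 ≤ n := hnN
          _ = n * 1 := (mul_one n).symm
          _ ≤ n * b2 := Nat.mul_le_mul_left n hb21
      omega
    omega
  -- the two key inequalities in ℕ
  have key1 : (4 * M * a + M) * p ^ K < 4 * E * q ^ (m * i) := by
    have hL : (0:ℝ) < ((4 * M * a + M : ℕ) : ℝ) * (p:ℝ) ^ K := by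
      have : (0:ℝ) < ((4 * M * a + M : ℕ) : ℝ) := by
        push_cast
        have : (1:ℝ) ≤ (M:ℝ) := by exact_mod_cast hM1
        have : (0:ℝ) ≤ (M:ℝ) * (a:ℝ) := by positivity
        nlinarith
      positivity
    have hR : (0:ℝ) < ((4 * E : ℕ) : ℝ) * (q:ℝ) ^ (m * i) := by
      have : (0:ℝ) < ((4 * E : ℕ) : ℝ) := by
        push_cast
        have : (1:ℝ) ≤ (E:ℝ) := by exact_mod_cast hE1
        linarith
      positivity
    have hlog : Real.log (((4 * M * a + M : ℕ) : ℝ) * (p:ℝ) ^ K)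
        < Real.log (((4 * E : ℕ) : ℝ) * (q:ℝ) ^ (m * i)) := by
      rw [Real.log_mul (by positivity) (by positivity),
        Real.log_mul (by positivity) (by positivity),
        Real.log_pow, Real.log_pow]
      rw [hK]
      push_cast
      rw [ht1] at hlow
      rw [hα, hβ] at hlow
      push_cast at hlow
      linarith [hlow]
    have hfin := (Real.exp_lt_exp.mpr hlog)
    rw [Real.exp_log hL, Real.exp_log hR] at hfin
    exact_mod_cast hfin
  have key2 : 4 * E * q ^ (m * i) < (4 * M * a + 2 * M) * p ^ K := by
    have hL : (0:ℝ) < ((4 * E : ℕ) : ℝ) * (q:ℝ) ^ (m * i) := by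
      have : (0:ℝ) < ((4 * E : ℕ) : ℝ) := by
        push_cast
        have : (1:ℝ) ≤ (E:ℝ) := by exact_mod_cast hE1
        linarith
      positivity
    have hR : (0:ℝ) < ((4 * M * a + 2 * M : ℕ) : ℝ) * (p:ℝ) ^ K := by
      have : (0:ℝ) < ((4 * M * a + 2 * M : ℕ) : ℝ) := by
        push_cast
        have : (1:ℝ) ≤ (M:ℝ) := by exact_mod_cast hM1
        have : (0:ℝ) ≤ (M:ℝ) * (a:ℝ) := by positivity
        nlinarith
      positivity
    have hlog : Real.log (((4 * E : ℕ) : ℝ) * (q:ℝ) ^ (m * i))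
        < Real.log (((4 * M * a + 2 * M : ℕ) : ℝ) * (p:ℝ) ^ K) := by
      rw [Real.log_mul (by positivity) (by positivity),
        Real.log_mul (by positivity) (by positivity),
        Real.log_pow, Real.log_pow]
      rw [hK]
      push_cast
      rw [ht2] at hhigh
      rw [hα, hβ] at hhigh
      push_cast at hhigh
      linarith [hhigh]
    have hfin := (Real.exp_lt_exp.mpr hlog)
    rw [Real.exp_log hL, Real.exp_log hR] at hfin
    exact_mod_cast hfin
  -- the element of X in the dead block
  obtain ⟨y, hyX, hy⟩ := H2 i
  apply H1 n y hyX
  -- integer arithmetic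
  have hFle : (F : ℤ) ≤ (F0 : ℤ) := by
    rw [hF0]
    exact Int.le_natAbs
  have hFge : -(F0 : ℤ) ≤ (F : ℤ) := by
    rw [hF0]
    omega
  obtain ⟨P, hPeq⟩ : ∃ P : ℤ, P = (p : ℤ) ^ K := ⟨_, rfl⟩
  obtain ⟨Q, hQeq⟩ : ∃ Q : ℤ, Q = (q : ℤ) ^ (m * i) := ⟨_, rfl⟩
  have hPpos : (0:ℤ) < P := by rw [hPeq]; positivity
  have key1' : ((4 * M * a + M : ℕ) : ℤ) * P < ((4 * E : ℕ) : ℤ) * Q := by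
    rw [hPeq, hQeq]
    exact_mod_cast key1
  have key2' : ((4 * E : ℕ) : ℤ) * Q < ((4 * M * a + 2 * M : ℕ) : ℤ) * P := by
    rw [hPeq, hQeq]
    exact_mod_cast key2
  have hPbig' : ((4 * F0 + 4 : ℕ) : ℤ) ≤ P := by
    rw [hPeq]
    exact_mod_cast hPbig
  have hy' : (M : ℤ) * (y : ℤ) = (E : ℤ) * Q - F := by rw [hQeq]; exact_mod_cast hy
  push_cast at key1' key2' hPbig'
  have hM1' : (1:ℤ) ≤ (M:ℤ) := by exact_mod_cast hM1
  have hMP : P ≤ (M : ℤ) * P := le_mul_of_one_le_left hPpos.le hM1'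
  have hyl : (a : ℤ) * P ≤ (y : ℤ) := by
    by_contra hc
    push_neg at hc
    have h1 : (y : ℤ) + 1 ≤ a * P := hc
    have h2 : (M:ℤ) * ((y:ℤ) + 1) ≤ M * ((a:ℤ) * P) :=
      mul_le_mul_of_nonneg_left h1 (by positivity)
    have h3 : (M:ℤ) * ((y:ℤ) + 1) = M * y + M := by ring
    have h4 : (M:ℤ) * ((a:ℤ) * P) = M * a * P := by ring
    linarith [hy', key1', hMP, hPbig', hFle, h2, h3, h4]
  have hyu : (y : ℤ) < (a + 1 : ℤ) * P := by
    by_contra hc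
    push_neg at hc
    have h2 : (M:ℤ) * (((a:ℤ)+1) * P) ≤ M * y :=
      mul_le_mul_of_nonneg_left hc (by positivity)
    linarith [hy', key2', hMP, hPbig', hFge, hPpos, h2]
  constructor
  · have hfin : ((a * p ^ K : ℕ) : ℤ) ≤ (y : ℤ) := by
      rw [hPeq] at hyl
      push_cast
      exact_mod_cast hyl
    exact_mod_cast hfin
  · have hfin : (y : ℤ) < (((a + 1) * p ^ K : ℕ) : ℤ) := by
      rw [hPeq] at hyu
      push_cast
      exact_mod_cast hyu
    exact_mod_cast hfin
end
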